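/- Let θ∈(0,1). Let w₁:[0,∞)→ℝ be continuously differentiable, nondecreasing, with w₁(t)>0 for all t≥0, w₁ and w₁′ bounded on [0,∞), and suppose there is T_w>0 such that w₁(t)=w₁(T_w) for all t≥T_w. Then for every t>0: |∂^θ(w₁²)(t)| / w₁(t) ≤ w₁(0)/( t^θ·Γ(1−θ) ) + ( 2·sup_{s≥0}|w₁′(s)| / Γ(2−θ) )·T_w^{1−θ}. -/

import Mathlib

open MeasureTheory Set intervalIntegral Topology Filter

/-! ### rpow measurability -/

lemma measurable_rpow_const (c : ℝ) : Measurable fun x : ℝ => x ^ c := by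
  have e : (fun x : ℝ => x ^ c) = fun x =>
      if x = 0 then (if c = 0 then 1 else 0)
      else Real.exp (Real.log x * c) * (if x < 0 then Real.cos (c * Real.pi) else 1) := by
    funext x
    rcases lt_trichotomy x 0 with h | h | h
    · rw [if_neg h.ne, if_pos h, Real.rpow_def_of_neg h, mul_comm c Real.pi]
    · subst h
      rw [if_pos rfl]
      by_cases hc : c = 0
      · rw [if_pos hc, hc, Real.rpow_zero]
      · rw [if_neg hc, Real.zero_rpow hc]
    · rw [if_neg h.ne', if_neg (not_lt.2 h.le), mul_one, Real.rpow_def_of_pos h]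
  rw [e]
  refine Measurable.ite ?_ measurable_const ?_
  · rw [setOf_eq_eq_singleton]
    exact measurableSet_singleton 0
  · refine ((Real.measurable_exp.comp (Real.measurable_log.mul_const c)).mul ?_)
    exact Measurable.ite measurableSet_Iio measurable_const measurable_const

lemma meas_shift_rpow (θ c : ℝ) : Measurable (fun u : ℝ => (c - u) ^ (-θ)) :=
  (measurable_rpow_const (-θ)).comp (measurable_const.sub measurable_id)

lemma meas_rpow_sub (θ x : ℝ) : Measurable (fun p : ℝ × ℝ => (x - p.1) ^ (-θ)) :=
  (measurable_rpow_const (-θ)).comp (measurable_const.sub measurable_fst)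

lemma meas_rpow_diff (θ : ℝ) : Measurable (fun p : ℝ × ℝ => (p.1 - p.2) ^ (-θ)) :=
  (measurable_rpow_const (-θ)).comp (measurable_fst.sub measurable_snd)

/-! ### Auxiliary integral computations -/

lemma aux_ii_rpow {θ : ℝ} (hθ1 : θ < 1) (t a b : ℝ) :
    IntervalIntegrable (fun s => (t - s) ^ (-θ)) volume a b := by
  have := (intervalIntegrable_rpow' (a := t - a) (b := t - b) (r := -θ)
    (by linarith)).comp_sub_left t
  simpa using this

lemma aux_val_rpow {θ : ℝ} (hθ1 : θ < 1) (c a b : ℝ) :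
    ∫ s in a..b, (c - s) ^ (-θ) = ((c - a) ^ (1-θ) - (c - b) ^ (1-θ)) / (1-θ) := by
  rw [intervalIntegral.integral_comp_sub_left (fun r => r ^ (-θ)) c]
  rw [integral_rpow (Or.inl (by linarith))]
  have h1 : -θ + 1 = 1 - θ := by ring
  rw [h1]

lemma aux_val_rpow2 {θ : ℝ} (hθ1 : θ < 1) (c a b : ℝ) :
    ∫ s in a..b, (s - c) ^ (-θ) = ((b - c) ^ (1-θ) - (a - c) ^ (1-θ)) / (1-θ) := by
  rw [intervalIntegral.integral_comp_sub_right (fun r => r ^ (-θ)) c]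
  rw [integral_rpow (Or.inl (by linarith))]
  have h1 : -θ + 1 = 1 - θ := by ring
  rw [h1]

/-! ### Fubini on the triangle -/

lemma tri_swap (x : ℝ) (k : ℝ → ℝ → ℝ)
    (hK : Integrable (fun p : ℝ × ℝ => if p.2 ≤ p.1 then k p.1 p.2 else 0)
      ((volume.restrict (Ioc (0:ℝ) x)).prod (volume.restrict (Ioc (0:ℝ) x)))) :
    ∫ s in Ioc (0:ℝ) x, (∫ u in Ioc (0:ℝ) s, k s u) =
      ∫ u in Ioc (0:ℝ) x, (∫ s in Ioc u x, k s u) := by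
  have h1 : ∀ s ∈ Ioc (0:ℝ) x,
      (∫ u in Ioc (0:ℝ) x, (if u ≤ s then k s u else 0)) =
        ∫ u in Ioc (0:ℝ) s, k s u := by
    intro s hs
    have e : (fun u => if u ≤ s then k s u else 0) = (Iic s).indicator (k s) := by
      funext u; simp [Set.indicator_apply, mem_Iic]
    rw [e, MeasureTheory.integral_indicator measurableSet_Iic,
      Measure.restrict_restrict measurableSet_Iic]
    congr 1
    rw [Set.inter_comm, Set.Ioc_inter_Iic, min_eq_right hs.2]
  have h2 : ∀ u ∈ Ioc (0:ℝ) x,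
      (∫ s in Ioc (0:ℝ) x, (if u ≤ s then k s u else 0)) =
        ∫ s in Ioc u x, k s u := by
    intro u hu
    have e : (fun s => if u ≤ s then k s u else 0) = (Ici u).indicator (fun s => k s u) := by
      funext s; simp [Set.indicator_apply, mem_Ici]
    rw [e, MeasureTheory.integral_indicator measurableSet_Ici,
      Measure.restrict_restrict measurableSet_Ici]
    have : Ici u ∩ Ioc 0 x = Icc u x := by
      ext s
      simp only [mem_inter_iff, mem_Ici, mem_Ioc, mem_Icc]
      exact ⟨fun ⟨h1, _, h3⟩ => ⟨h1, h3⟩, fun ⟨h1, h2⟩ => ⟨h1, lt_of_lt_of_le hu.1 h1, h2⟩⟩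
    rw [this, integral_Icc_eq_integral_Ioc]
  calc ∫ s in Ioc (0:ℝ) x, (∫ u in Ioc (0:ℝ) s, k s u)
      = ∫ s in Ioc (0:ℝ) x, (∫ u in Ioc (0:ℝ) x, (if u ≤ s then k s u else 0)) :=
        (setIntegral_congr_fun measurableSet_Ioc (fun s hs => (h1 s hs).symm))
    _ = ∫ u in Ioc (0:ℝ) x, (∫ s in Ioc (0:ℝ) x, (if u ≤ s then k s u else 0)) :=
        integral_integral_swap hK
    _ = ∫ u in Ioc (0:ℝ) x, (∫ s in Ioc u x, k s u) :=
        setIntegral_congr_fun measurableSet_Ioc (fun u hu => h2 u hu)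

lemma ite_cut (x τ : ℝ) (hτ : τ ∈ Ioc (0:ℝ) x) (f : ℝ → ℝ) :
    ∫ u in Ioc (0:ℝ) x, (if u ≤ τ then f u else 0) = ∫ u in Ioc (0:ℝ) τ, f u := by
  have e : (fun u => if u ≤ τ then f u else 0) = (Iic τ).indicator f := by
    funext u; simp [Set.indicator_apply, mem_Iic]
  rw [e, MeasureTheory.integral_indicator measurableSet_Iic,
    Measure.restrict_restrict measurableSet_Iic, Set.inter_comm,
    Set.Ioc_inter_Iic, min_eq_right hτ.2]

/-- The (shifted) Riemann–Liouville fractional integral of `g`. -/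
noncomputable def fracInt (θ : ℝ) (g : ℝ → ℝ) (τ : ℝ) : ℝ :=
  ∫ u in Ioc (0:ℝ) τ, (τ - u) ^ (-θ) * g u

section Aux

variable {θ M : ℝ} (hθ0 : 0 < θ) (hθ1 : θ < 1) {g : ℝ → ℝ}
  (hg : ContinuousOn g (Ici 0)) (hM : ∀ u ∈ Ici (0:ℝ), |g u| ≤ M)

include hθ1 hg hM in
lemma intOn (c a b : ℝ) (ha : 0 ≤ a) :
    IntegrableOn (fun u => (c - u) ^ (-θ) * g u) (Ioc a b) := by
  have hker : IntegrableOn (fun u => (c - u) ^ (-θ)) (Ioc a b) := by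
    rcases le_or_gt a b with hab | hab
    · exact (intervalIntegrable_iff_integrableOn_Ioc_of_le hab).1 (aux_ii_rpow hθ1 c a b)
    · simp [Ioc_eq_empty (not_lt.2 hab.le)]
  have hmeas : AEStronglyMeasurable (fun u => (c - u) ^ (-θ) * g u)
      (volume.restrict (Ioc a b)) := by
    refine AEStronglyMeasurable.mul ?_ ?_
    · exact (meas_shift_rpow θ c).aestronglyMeasurable
    · exact ((hg.mono (fun u hu => le_trans ha hu.1.le)).aestronglyMeasurable measurableSet_Ioc)
  refine Integrable.mono' (hker.norm.mul_const M) hmeas ?_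
  refine (ae_restrict_iff' measurableSet_Ioc).2 (Filter.Eventually.of_forall fun u hu => ?_)
  rw [norm_mul]
  refine mul_le_mul_of_nonneg_left ?_ (norm_nonneg _)
  rw [Real.norm_eq_abs]
  exact hM u (le_trans ha hu.1.le)

include hg in
lemma aesm_g_snd (x : ℝ) :
    AEStronglyMeasurable (fun p : ℝ × ℝ => g p.2)
      ((volume.restrict (Ioc (0:ℝ) x)).prod (volume.restrict (Ioc (0:ℝ) x))) := by
  rw [Measure.prod_restrict]
  refine ContinuousOn.aestronglyMeasurable ?_ (measurableSet_Ioc.prod measurableSet_Ioc)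
  exact hg.comp continuous_snd.continuousOn (fun p hp => hp.2.1.le)

include hθ1 hg hM in
lemma intA (x : ℝ) (hx : 0 < x) :
    Integrable (fun p : ℝ × ℝ => if p.2 ≤ p.1 then (x - p.1) ^ (-θ) * g p.2 else 0)
      ((volume.restrict (Ioc (0:ℝ) x)).prod (volume.restrict (Ioc (0:ℝ) x))) := by
  set ν := volume.restrict (Ioc (0:ℝ) x)
  have hker : Integrable (fun s => |(x - s) ^ (-θ)|) ν :=
    (((intervalIntegrable_iff_integrableOn_Ioc_of_le hx.le).1 (aux_ii_rpow hθ1 x 0 x)).norm : _)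
  have hbig : Integrable (fun p : ℝ × ℝ => |(x - p.1) ^ (-θ)| * M) (ν.prod ν) :=
    hker.mul_prod (integrable_const M)
  have hmeas : AEStronglyMeasurable
      (fun p : ℝ × ℝ => if p.2 ≤ p.1 then (x - p.1) ^ (-θ) * g p.2 else 0) (ν.prod ν) := by
    have e : (fun p : ℝ × ℝ => if p.2 ≤ p.1 then (x - p.1) ^ (-θ) * g p.2 else 0)
        = {p : ℝ × ℝ | p.2 ≤ p.1}.indicator (fun p => (x - p.1) ^ (-θ) * g p.2) := by
      funext p; simp [Set.indicator_apply]
    rw [e]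
    exact (((meas_rpow_sub θ x).aestronglyMeasurable).mul (aesm_g_snd hg x)).indicator
      (measurableSet_le measurable_snd measurable_fst)
  refine Integrable.mono' hbig hmeas ?_
  have hae : ∀ᵐ p : ℝ × ℝ ∂(ν.prod ν), p ∈ Ioc (0:ℝ) x ×ˢ Ioc (0:ℝ) x := by
    rw [Measure.prod_restrict]
    exact ae_restrict_mem (measurableSet_Ioc.prod measurableSet_Ioc)
  filter_upwards [hae] with p hp
  by_cases h : p.2 ≤ p.1
  · simp only [h, if_true, norm_mul]
    rw [Real.norm_eq_abs, Real.norm_eq_abs]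
    exact mul_le_mul_of_nonneg_left (hM p.2 hp.2.1.le) (abs_nonneg _)
  · simp only [h, if_false, norm_zero]
    have hM0 : 0 ≤ M := le_trans (abs_nonneg _) (hM 0 Set.self_mem_Ici)
    exact mul_nonneg (abs_nonneg _) hM0

include hθ0 hθ1 hg hM in
lemma intB (x : ℝ) (hx : 0 < x) :
    Integrable (fun p : ℝ × ℝ => if p.2 ≤ p.1 then (p.1 - p.2) ^ (-θ) * g p.2 else 0)
      ((volume.restrict (Ioc (0:ℝ) x)).prod (volume.restrict (Ioc (0:ℝ) x))) := by
  have hM0 : 0 ≤ M := le_trans (abs_nonneg _) (hM 0 Set.self_mem_Ici)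
  have h1θ : (0:ℝ) < 1 - θ := by linarith
  set ν := volume.restrict (Ioc (0:ℝ) x) with hν
  have hgsnd : AEStronglyMeasurable (fun p : ℝ × ℝ => g p.2) (ν.prod ν) := aesm_g_snd hg x
  have hmeas : AEStronglyMeasurable
      (fun p : ℝ × ℝ => if p.2 ≤ p.1 then (p.1 - p.2) ^ (-θ) * g p.2 else 0) (ν.prod ν) := by
    have e : (fun p : ℝ × ℝ => if p.2 ≤ p.1 then (p.1 - p.2) ^ (-θ) * g p.2 else 0)
        = {p : ℝ × ℝ | p.2 ≤ p.1}.indicator (fun p => (p.1 - p.2) ^ (-θ) * g p.2) := by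
      funext p; simp [Set.indicator_apply]
    rw [e]
    exact (((meas_rpow_diff θ).aestronglyMeasurable).mul hgsnd).indicator
      (measurableSet_le measurable_snd measurable_fst)
  have hrr : ∀ τ : ℝ, τ ∈ Ioc (0:ℝ) x → ν.restrict (Iic τ) = volume.restrict (Ioc 0 τ) := by
    intro τ hτ
    rw [hν, Measure.restrict_restrict measurableSet_Iic, Set.inter_comm,
      Set.Ioc_inter_Iic, min_eq_right hτ.2]
  refine (integrable_prod_iff hmeas).2 ⟨?_, ?_⟩
  · refine (ae_restrict_iff' measurableSet_Ioc).2 (Filter.Eventually.of_forall fun τ hτ => ?_)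
    have e : (fun u => if u ≤ τ then (τ - u) ^ (-θ) * g u else 0)
        = (Iic τ).indicator (fun u => (τ - u) ^ (-θ) * g u) := by
      funext u; simp [Set.indicator_apply, mem_Iic]
    rw [e, integrable_indicator_iff measurableSet_Iic]
    show Integrable _ (ν.restrict (Iic τ))
    rw [hrr τ hτ]
    exact intOn hθ1 hg hM τ 0 τ (le_refl _)
  · set C := M * (x ^ (1-θ) / (1-θ)) with hC
    refine Integrable.mono' (integrable_const C) (hmeas.norm.integral_prod_right') ?_
    refine (ae_restrict_iff' measurableSet_Ioc).2 (Filter.Eventually.of_forall fun τ hτ => ?_)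
    have key : (∫ u, ‖if u ≤ τ then (τ - u) ^ (-θ) * g u else 0‖ ∂ν) ≤ C := by
      have hbig : Integrable ((Iic τ).indicator (fun u => (τ - u) ^ (-θ) * M)) ν := by
        rw [integrable_indicator_iff measurableSet_Iic]
        show Integrable _ (ν.restrict (Iic τ))
        rw [hrr τ hτ]
        exact ((intervalIntegrable_iff_integrableOn_Ioc_of_le hτ.1.le).1
          (aux_ii_rpow hθ1 τ 0 τ)).mul_const M
      have step1 : (∫ u, ‖if u ≤ τ then (τ - u) ^ (-θ) * g u else 0‖ ∂ν)
          ≤ ∫ u, (Iic τ).indicator (fun u => (τ - u) ^ (-θ) * M) u ∂ν := by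
        refine integral_mono_of_nonneg (Filter.Eventually.of_forall fun u => norm_nonneg _)
          hbig ?_
        refine (ae_restrict_iff' measurableSet_Ioc).2 (Filter.Eventually.of_forall fun u hu => ?_)
        by_cases h : u ≤ τ
        · simp only [h, if_true, Set.indicator_apply, mem_Iic, norm_mul]
          have h1 : ‖(τ - u) ^ (-θ)‖ = (τ - u) ^ (-θ) := by
            rw [Real.norm_eq_abs, abs_of_nonneg (Real.rpow_nonneg (by linarith) _)]
          rw [h1]
          refine mul_le_mul_of_nonneg_left ?_ (Real.rpow_nonneg (by linarith) _)
          rw [Real.norm_eq_abs]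
          exact hM u hu.1.le
        · simp only [h, if_false, Set.indicator_apply, mem_Iic, norm_zero]
          positivity
      have step2 : (∫ u, (Iic τ).indicator (fun u => (τ - u) ^ (-θ) * M) u ∂ν) ≤ C := by
        rw [MeasureTheory.integral_indicator measurableSet_Iic]
        rw [show ∫ u in Iic τ, (τ - u) ^ (-θ) * M ∂ν = ∫ u in Ioc 0 τ, (τ - u) ^ (-θ) * M by
          rw [← hrr τ hτ]]
        rw [← intervalIntegral.integral_of_le hτ.1.le, intervalIntegral.integral_mul_const,
          aux_val_rpow hθ1 τ 0 τ, sub_zero, sub_self, Real.zero_rpow (ne_of_gt h1θ), sub_zero,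
          hC]
        have hle : τ ^ (1-θ) ≤ x ^ (1-θ) := Real.rpow_le_rpow hτ.1.le hτ.2 h1θ.le
        have hstep : τ ^ (1-θ) * (1-θ)⁻¹ ≤ x ^ (1-θ) * (1-θ)⁻¹ :=
          mul_le_mul_of_nonneg_right hle (inv_nonneg.2 h1θ.le)
        calc τ ^ (1-θ) / (1-θ) * M = M * (τ ^ (1-θ) * (1-θ)⁻¹) := by ring
          _ ≤ M * (x ^ (1-θ) * (1-θ)⁻¹) := mul_le_mul_of_nonneg_left hstep hM0
          _ = M * (x ^ (1-θ) / (1-θ)) := by ring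
      exact step1.trans step2
    calc ‖∫ u, ‖if u ≤ τ then (τ - u) ^ (-θ) * g u else 0‖ ∂ν‖
        = ∫ u, ‖if u ≤ τ then (τ - u) ^ (-θ) * g u else 0‖ ∂ν := by
          rw [Real.norm_eq_abs, abs_of_nonneg (integral_nonneg fun u => norm_nonneg _)]
      _ ≤ C := key

include hθ0 hθ1 hg hM in
lemma keyA (x : ℝ) (hx : 0 < x) :
    ∫ s in Ioc (0:ℝ) x, ((x - s) ^ (-θ) * ∫ u in Ioc (0:ℝ) s, g u)
      = ∫ u in Ioc (0:ℝ) x, g u * ((x - u) ^ (1-θ) / (1-θ)) := by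
  have swap := tri_swap x (fun s u => (x - s) ^ (-θ) * g u) (intA hθ1 hg hM x hx)
  calc ∫ s in Ioc (0:ℝ) x, ((x - s) ^ (-θ) * ∫ u in Ioc (0:ℝ) s, g u)
      = ∫ s in Ioc (0:ℝ) x, (∫ u in Ioc (0:ℝ) s, (x - s) ^ (-θ) * g u) := by
        refine MeasureTheory.setIntegral_congr_fun measurableSet_Ioc (fun s _ => ?_)
        rw [MeasureTheory.integral_const_mul]
    _ = ∫ u in Ioc (0:ℝ) x, (∫ s in Ioc u x, (x - s) ^ (-θ) * g u) := swap
    _ = ∫ u in Ioc (0:ℝ) x, g u * ((x - u) ^ (1-θ) / (1-θ)) := by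
        refine MeasureTheory.setIntegral_congr_fun measurableSet_Ioc (fun u hu => ?_)
        rw [MeasureTheory.integral_mul_const, ← intervalIntegral.integral_of_le hu.2,
          aux_val_rpow hθ1 x u x, sub_self, Real.zero_rpow (by intro h; linarith), sub_zero,
          mul_comm]

include hθ0 hθ1 hg hM in
lemma keyB (x : ℝ) (hx : 0 < x) :
    ∫ τ in Ioc (0:ℝ) x, fracInt θ g τ
      = ∫ u in Ioc (0:ℝ) x, g u * ((x - u) ^ (1-θ) / (1-θ)) := by
  have swap := tri_swap x (fun τ u => (τ - u) ^ (-θ) * g u) (intB hθ0 hθ1 hg hM x hx)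
  calc ∫ τ in Ioc (0:ℝ) x, fracInt θ g τ
      = ∫ u in Ioc (0:ℝ) x, (∫ τ in Ioc u x, (τ - u) ^ (-θ) * g u) := swap
    _ = ∫ u in Ioc (0:ℝ) x, g u * ((x - u) ^ (1-θ) / (1-θ)) := by
        refine MeasureTheory.setIntegral_congr_fun measurableSet_Ioc (fun u hu => ?_)
        rw [MeasureTheory.integral_mul_const, ← intervalIntegral.integral_of_le hu.2,
          aux_val_rpow2 hθ1 u u x, sub_self, Real.zero_rpow (by intro h; linarith), sub_zero,
          mul_comm]

include hθ0 hθ1 hg hM in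
lemma fracInt_integrableOn (x : ℝ) (hx : 0 < x) :
    IntegrableOn (fracInt θ g) (Ioc (0:ℝ) x) := by
  have h := (intB hθ0 hθ1 hg hM x hx).integral_prod_left
  refine h.congr ?_
  refine (ae_restrict_iff' measurableSet_Ioc).2 (Filter.Eventually.of_forall fun τ hτ => ?_)
  exact ite_cut x τ hτ (fun u => (τ - u) ^ (-θ) * g u)

end Aux

lemma real_rpow_subadd {p a b : ℝ} (ha : 0 ≤ a) (hb : 0 ≤ b) (hp : 0 ≤ p) (hp1 : p ≤ 1) :
    (a + b) ^ p ≤ a ^ p + b ^ p := by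
  have h := NNReal.rpow_add_le_add_rpow a.toNNReal b.toNNReal hp hp1
  have h2 := NNReal.coe_le_coe.2 h
  push_cast at h2
  rwa [Real.coe_toNNReal a ha, Real.coe_toNNReal b hb] at h2

section Aux2

variable {θ M : ℝ} (hθ0 : 0 < θ) (hθ1 : θ < 1) {g : ℝ → ℝ}
  (hg : ContinuousOn g (Ici 0)) (hM : ∀ u ∈ Ici (0:ℝ), |g u| ≤ M)

include hθ0 hθ1 hg hM in
lemma kernel_eq (v : ℝ → ℝ) (hv : ∀ s ∈ Ici (0:ℝ), HasDerivAt v (g s) s)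
    (x : ℝ) (hx : 0 < x) :
    (∫ s in (0:ℝ)..x, (x - s) ^ (-θ) * v s)
      = v 0 * (x ^ (1-θ) / (1-θ)) + ∫ τ in Ioc (0:ℝ) x, fracInt θ g τ := by
  have hgint : IntegrableOn g (uIcc (0:ℝ) x) := by
    rw [uIcc_of_le hx.le]
    exact (hg.mono (fun u hu => hu.1)).integrableOn_Icc
  have hftc : ∀ s ∈ Icc (0:ℝ) x, v s = v 0 + ∫ u in (0:ℝ)..s, g u := by
    intro s hs
    have hgi : IntervalIntegrable g volume 0 s := by
      apply ContinuousOn.intervalIntegrable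
      rw [uIcc_of_le hs.1]
      exact hg.mono (fun u hu => hu.1)
    have := intervalIntegral.integral_eq_sub_of_hasDerivAt
      (f := v) (f' := g) (fun u hu => hv u (by
        rw [uIcc_of_le hs.1] at hu; exact hu.1)) hgi
    rw [this]; ring
  have II₁ : IntervalIntegrable (fun s => (x - s) ^ (-θ) * v 0) volume 0 x :=
    (aux_ii_rpow hθ1 x 0 x).mul_const (v 0)
  have hprim : ContinuousOn (fun s => ∫ u in (0:ℝ)..s, g u) (uIcc (0:ℝ) x) :=
    intervalIntegral.continuousOn_primitive_interval hgint
  have II₂ : IntervalIntegrable (fun s => (x - s) ^ (-θ) * (∫ u in (0:ℝ)..s, g u)) volume 0 x :=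
    (aux_ii_rpow hθ1 x 0 x).mul_continuousOn hprim
  have hsplit : (∫ s in (0:ℝ)..x, (x - s) ^ (-θ) * v s)
      = (∫ s in (0:ℝ)..x, (x - s) ^ (-θ) * v 0)
        + ∫ s in (0:ℝ)..x, (x - s) ^ (-θ) * (∫ u in (0:ℝ)..s, g u) := by
    rw [← intervalIntegral.integral_add II₁ II₂]
    apply intervalIntegral.integral_congr
    intro s hs
    rw [uIcc_of_le hx.le] at hs
    dsimp only
    rw [hftc s hs]
    ring
  have hpiece1 : (∫ s in (0:ℝ)..x, (x - s) ^ (-θ) * v 0) = v 0 * (x ^ (1-θ) / (1-θ)) := by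
    rw [intervalIntegral.integral_mul_const, aux_val_rpow hθ1 x 0 x, sub_zero, sub_self,
      Real.zero_rpow (by intro h; linarith), sub_zero, mul_comm]
  have hpiece2 : (∫ s in (0:ℝ)..x, (x - s) ^ (-θ) * (∫ u in (0:ℝ)..s, g u))
      = ∫ τ in Ioc (0:ℝ) x, fracInt θ g τ := by
    rw [intervalIntegral.integral_of_le hx.le]
    have e : ∀ s ∈ Ioc (0:ℝ) x, (x - s) ^ (-θ) * (∫ u in (0:ℝ)..s, g u)
        = (x - s) ^ (-θ) * (∫ u in Ioc (0:ℝ) s, g u) := by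
      intro s hs
      rw [intervalIntegral.integral_of_le hs.1.le]
    rw [setIntegral_congr_fun measurableSet_Ioc e, keyA hθ0 hθ1 hg hM x hx,
      ← keyB hθ0 hθ1 hg hM x hx]
  rw [hsplit, hpiece1, hpiece2]

include hθ0 hθ1 hg hM in
lemma fracInt_continuousAt (t : ℝ) (ht : 0 < t) : ContinuousAt (fracInt θ g) t := by
  set Ψ : ℝ → ℝ := fun τ => ∫ σ in (0:ℝ)..1, (1-σ) ^ (-θ) * g (τ*σ) with hΨdef
  have h0 : ∀ᶠ τ in 𝓝 t, (0:ℝ) < τ := eventually_gt_nhds ht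
  have huIoc : Set.uIoc (0:ℝ) 1 = Ioc 0 1 := uIoc_of_le zero_le_one
  have hΨ : ContinuousAt Ψ t := by
    apply intervalIntegral.continuousAt_of_dominated_interval
      (bound := fun σ => (1-σ) ^ (-θ) * M)
    · filter_upwards [h0] with τ hτ
      rw [huIoc]
      refine AEStronglyMeasurable.mul ?_ ?_
      · exact (meas_shift_rpow θ 1).aestronglyMeasurable
      · refine (hg.comp (continuous_const.mul continuous_id).continuousOn
          (fun σ hσ => ?_)).aestronglyMeasurable measurableSet_Ioc
        exact mul_nonneg hτ.le hσ.1.le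
    · filter_upwards [h0] with τ hτ
      refine Filter.Eventually.of_forall fun σ hσ => ?_
      rw [huIoc] at hσ
      rw [norm_mul, Real.norm_eq_abs, Real.norm_eq_abs,
        abs_of_nonneg (Real.rpow_nonneg (by linarith [hσ.2]) _)]
      refine mul_le_mul_of_nonneg_left ?_ (Real.rpow_nonneg (by linarith [hσ.2]) _)
      exact hM (τ*σ) (mul_nonneg hτ.le hσ.1.le)
    · exact (aux_ii_rpow hθ1 1 0 1).mul_const M
    · refine Filter.Eventually.of_forall fun σ hσ => ?_
      rw [huIoc] at hσ
      have h1 : ContinuousAt g (t*σ) := by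
        refine hg.continuousAt ?_
        exact Filter.mem_of_superset (Ioi_mem_nhds (mul_pos ht hσ.1))
          (fun y hy => Set.mem_Ici.2 (le_of_lt hy))
      have h2 : ContinuousAt (fun τ : ℝ => τ * σ) t := (continuous_mul_right σ).continuousAt
      have h3 : ContinuousAt (fun τ : ℝ => g (τ * σ)) t :=
        ContinuousAt.comp (f := fun τ : ℝ => τ * σ) h1 h2
      exact continuousAt_const.mul h3
  have heq : ∀ τ : ℝ, 0 < τ → fracInt θ g τ = τ ^ (1-θ) * Ψ τ := by
    intro τ hτ
    have hsub := intervalIntegral.integral_comp_mul_left (a := (0:ℝ)) (b := 1)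
      (f := fun u => (τ - u) ^ (-θ) * g u) (c := τ) (ne_of_gt hτ)
    rw [mul_zero, mul_one] at hsub
    calc fracInt θ g τ = ∫ u in (0:ℝ)..τ, (τ - u) ^ (-θ) * g u :=
          (intervalIntegral.integral_of_le hτ.le).symm
      _ = τ * ∫ σ in (0:ℝ)..1, (τ - τ*σ) ^ (-θ) * g (τ*σ) := by
          rw [hsub, smul_eq_mul, ← mul_assoc, mul_inv_cancel₀ (ne_of_gt hτ), one_mul]
      _ = τ * ∫ σ in (0:ℝ)..1, τ ^ (-θ) * ((1-σ) ^ (-θ) * g (τ*σ)) := by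
          apply congrArg
          apply intervalIntegral.integral_congr
          intro σ hσ
          rw [uIcc_of_le zero_le_one] at hσ
          dsimp only
          have e : τ - τ*σ = τ*(1-σ) := by ring
          rw [e, Real.mul_rpow hτ.le (by linarith [hσ.2])]
          ring
      _ = τ ^ (1-θ) * Ψ τ := by
          rw [intervalIntegral.integral_const_mul, ← mul_assoc]
          congr 1
          have e := Real.rpow_add hτ 1 (-θ)
          rw [Real.rpow_one] at e
          rw [show (1:ℝ)-θ = 1 + -θ by ring, e]
  have hev : (fun τ => τ ^ (1-θ) * Ψ τ) =ᶠ[𝓝 t] fracInt θ g := by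
    filter_upwards [h0] with τ hτ using (heq τ hτ).symm
  have hc : ContinuousAt (fun τ => τ ^ (1-θ) * Ψ τ) t :=
    (Real.continuousAt_rpow_const t (1-θ) (Or.inl (ne_of_gt ht))).mul hΨ
  exact hc.congr hev

include hθ0 hθ1 hg hM in
lemma fracInt_bound (t Tw C : ℝ) (ht : 0 < t) (hTw : 0 < Tw) (hC0 : 0 ≤ C)
    (hC : ∀ u ∈ Ioc (0:ℝ) t, |g u| ≤ C) (hzero : ∀ u : ℝ, Tw < u → g u = 0) :
    |fracInt θ g t| ≤ C * Tw ^ (1-θ) / (1-θ) := by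
  have h1θ : (0:ℝ) < 1 - θ := by linarith
  have hbnd : ∀ a b : ℝ, 0 ≤ a → a ≤ b → b ≤ t →
      |∫ u in Ioc a b, (t - u) ^ (-θ) * g u|
        ≤ C * ((t - a) ^ (1-θ) - (t - b) ^ (1-θ)) / (1-θ) := by
    intro a b ha hab hbt
    have hker : IntegrableOn (fun u => (t - u) ^ (-θ)) (Ioc a b) :=
      (intervalIntegrable_iff_integrableOn_Ioc_of_le hab).1 (aux_ii_rpow hθ1 t a b)
    have h1 : |∫ u in Ioc a b, (t - u) ^ (-θ) * g u|
        ≤ ∫ u in Ioc a b, (t - u) ^ (-θ) * C := by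
      rw [← Real.norm_eq_abs]
      refine norm_integral_le_of_norm_le (hker.mul_const C) ?_
      refine (ae_restrict_iff' measurableSet_Ioc).2 (Filter.Eventually.of_forall fun u hu => ?_)
      rw [norm_mul, Real.norm_eq_abs, Real.norm_eq_abs,
        abs_of_nonneg (Real.rpow_nonneg (by linarith [hu.2]) _)]
      refine mul_le_mul_of_nonneg_left ?_ (Real.rpow_nonneg (by linarith [hu.2]) _)
      exact hC u ⟨lt_of_le_of_lt ha hu.1, hu.2.trans hbt⟩
    have h2 : (∫ u in Ioc a b, (t - u) ^ (-θ) * C)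
        = C * ((t - a) ^ (1-θ) - (t - b) ^ (1-θ)) / (1-θ) := by
      rw [← intervalIntegral.integral_of_le hab, intervalIntegral.integral_mul_const,
        aux_val_rpow hθ1 t a b]
      ring
    rw [h2] at h1
    exact h1
  have hfinish : ∀ X : ℝ, X ≤ Tw ^ (1-θ) → C * X / (1-θ) ≤ C * Tw ^ (1-θ) / (1-θ) := by
    intro X hX
    have hstep : C * X ≤ C * Tw ^ (1-θ) := mul_le_mul_of_nonneg_left hX hC0
    rw [div_le_div_iff_of_pos_right h1θ]
    exact hstep
  rcases le_or_gt t Tw with hcase | hcase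
  · have h := hbnd 0 t (le_refl 0) ht.le (le_refl t)
    rw [sub_self, Real.zero_rpow (ne_of_gt h1θ), sub_zero, sub_zero] at h
    refine h.trans (hfinish _ ?_)
    exact Real.rpow_le_rpow ht.le hcase h1θ.le
  · have hsplitset : Ioc (0:ℝ) Tw ∪ Ioc Tw t = Ioc 0 t := Ioc_union_Ioc_eq_Ioc hTw.le hcase.le
    have hint1 : IntegrableOn (fun u => (t - u) ^ (-θ) * g u) (Ioc (0:ℝ) Tw) :=
      intOn hθ1 hg hM t 0 Tw (le_refl 0)
    have hint2 : IntegrableOn (fun u => (t - u) ^ (-θ) * g u) (Ioc Tw t) :=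
      intOn hθ1 hg hM t Tw t hTw.le
    have hsplit : fracInt θ g t = (∫ u in Ioc (0:ℝ) Tw, (t - u) ^ (-θ) * g u)
        + ∫ u in Ioc Tw t, (t - u) ^ (-θ) * g u := by
      rw [fracInt, ← hsplitset, setIntegral_union (Set.Ioc_disjoint_Ioc_of_le le_rfl)
        measurableSet_Ioc hint1 hint2]
    have hzero2 : (∫ u in Ioc Tw t, (t - u) ^ (-θ) * g u) = 0 := by
      rw [setIntegral_congr_fun measurableSet_Ioc
        (fun u hu => by rw [hzero u hu.1, mul_zero] : EqOn _ (fun _ => (0:ℝ)) (Ioc Tw t))]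
      simp
    rw [hsplit, hzero2, add_zero]
    have h := hbnd 0 Tw (le_refl 0) hTw.le hcase.le
    rw [sub_zero] at h
    refine h.trans (hfinish _ ?_)
    have := real_rpow_subadd (by linarith : (0:ℝ) ≤ t - Tw) hTw.le h1θ.le (by linarith)
    rw [show t - Tw + Tw = t by ring] at this
    linarith

end Aux2

/-- Kernel whose derivative is the Riemann–Liouville fractional derivative. -/
noncomputable def RLkernel (θ : ℝ) (v : ℝ → ℝ) (τ : ℝ) : ℝ :=
  (Real.Gamma (1 - θ))⁻¹ * ∫ s in (0:ℝ)..τ, (τ - s) ^ (-θ) * v s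

/-- Riemann–Liouville fractional derivative `∂^θ v`. -/
noncomputable def RLderiv (θ : ℝ) (v : ℝ → ℝ) (t : ℝ) : ℝ := deriv (RLkernel θ v) t

theorem stmt12 (θ : ℝ) (hθ : θ ∈ Ioo (0:ℝ) 1)
    (w₁ w₁' : ℝ → ℝ) (Tw B : ℝ) (hTw : 0 < Tw)
    (hd : ∀ t ∈ Ici (0:ℝ), HasDerivAt w₁ (w₁' t) t)
    (hc : ContinuousOn w₁' (Ici 0))
    (hmono : ∀ s t : ℝ, 0 ≤ s → s ≤ t → w₁ s ≤ w₁ t)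
    (hpos : ∀ t ∈ Ici (0:ℝ), 0 < w₁ t)
    (hbd : ∃ Bw, ∀ t ∈ Ici (0:ℝ), |w₁ t| ≤ Bw)
    (hB : ∀ t ∈ Ici (0:ℝ), |w₁' t| ≤ B)
    (hconst : ∀ t ≥ Tw, w₁ t = w₁ Tw) :
    ∀ t > (0:ℝ),
      |RLderiv θ (fun s => (w₁ s) ^ 2) t| / w₁ t ≤
        w₁ 0 / (t ^ θ * Real.Gamma (1 - θ))
          + 2 * B / Real.Gamma (2 - θ) * Tw ^ (1 - θ) := by
  obtain ⟨hθ0, hθ1⟩ := hθ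
  obtain ⟨Bw, hBw⟩ := hbd
  intro t ht
  have h1θ : (0:ℝ) < 1 - θ := by linarith
  set v : ℝ → ℝ := fun s => (w₁ s) ^ 2 with hvdef
  set g : ℝ → ℝ := fun s => 2 * w₁ s * w₁' s with hgdef
  have hw0 : 0 < w₁ 0 := hpos 0 Set.self_mem_Ici
  have hwt : 0 < w₁ t := hpos t (Set.mem_Ici.2 ht.le)
  have hB0 : 0 ≤ B := le_trans (abs_nonneg _) (hB 0 Set.self_mem_Ici)
  have hBw0 : 0 ≤ Bw := le_trans (abs_nonneg _) (hBw 0 Set.self_mem_Ici)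
  have hΓ : 0 < Real.Gamma (1-θ) := Real.Gamma_pos_of_pos h1θ
  have hΓ2 : Real.Gamma (2-θ) = (1-θ) * Real.Gamma (1-θ) := by
    rw [show (2:ℝ)-θ = (1-θ)+1 by ring, Real.Gamma_add_one (ne_of_gt h1θ)]
  have hv : ∀ s ∈ Ici (0:ℝ), HasDerivAt v (g s) s := by
    intro s hs
    have h2 := (hd s hs).pow 2
    have e : (↑(2:ℕ) : ℝ) * w₁ s ^ (2-1) * w₁' s = g s := by
      rw [hgdef]; push_cast; ring
    rw [e] at h2
    exact h2
  have hgc : ContinuousOn g (Ici 0) := by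
    refine ContinuousOn.mul (continuousOn_const.mul ?_) hc
    exact fun s hs => ((hd s hs).continuousAt).continuousWithinAt
  set M : ℝ := 2 * Bw * B with hMdef
  have hM : ∀ u ∈ Ici (0:ℝ), |g u| ≤ M := by
    intro u hu
    have h1 := hBw u hu
    have h2 := hB u hu
    show |2 * w₁ u * w₁' u| ≤ 2 * Bw * B
    rw [abs_mul, abs_mul, abs_two]
    nlinarith [abs_nonneg (w₁ u), abs_nonneg (w₁' u)]
  have hgzero : ∀ u : ℝ, Tw < u → g u = 0 := by
    intro u hu
    have h1 : HasDerivAt w₁ (w₁' u) u := hd u (Set.mem_Ici.2 (le_of_lt (lt_trans hTw hu)))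
    have h2 : HasDerivAt w₁ 0 u := by
      have hev : w₁ =ᶠ[𝓝 u] fun _ => w₁ Tw := by
        filter_upwards [Ioi_mem_nhds hu] with y hy using hconst y (le_of_lt hy)
      exact (hasDerivAt_const u (w₁ Tw)).congr_of_eventuallyEq hev
    have hz : w₁' u = 0 := h1.unique h2
    show 2 * w₁ u * w₁' u = 0
    rw [hz, mul_zero]
  set c0 : ℝ := (Real.Gamma (1-θ))⁻¹ with hc0def
  set Hfun : ℝ → ℝ := fun τ => c0 * (v 0 * τ ^ (-θ) + fracInt θ g τ) with hHdef
  have hsp : ∀ x : ℝ, IntervalIntegrable (fun τ => v 0 * τ ^ (-θ)) volume 0 x :=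
    fun x => (intervalIntegrable_rpow' (by linarith)).const_mul (v 0)
  have hker_eq : ∀ x : ℝ, 0 < x → RLkernel θ v x = ∫ τ in (0:ℝ)..x, Hfun τ := by
    intro x hx
    have hfi : IntervalIntegrable (fracInt θ g) volume 0 x :=
      (intervalIntegrable_iff_integrableOn_Ioc_of_le hx.le).2
        (fracInt_integrableOn hθ0 hθ1 hgc hM x hx)
    have hrw : x ^ (-θ+1) = x ^ (1-θ) := by rw [show -θ+1 = 1-θ by ring]
    calc RLkernel θ v x = c0 * ∫ s in (0:ℝ)..x, (x - s) ^ (-θ) * v s := rfl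
      _ = c0 * (v 0 * (x ^ (1-θ) / (1-θ)) + ∫ τ in Ioc (0:ℝ) x, fracInt θ g τ) := by
          rw [kernel_eq hθ0 hθ1 hgc hM v hv x hx]
      _ = ∫ τ in (0:ℝ)..x, Hfun τ := by
          rw [hHdef]
          dsimp only
          rw [intervalIntegral.integral_const_mul, intervalIntegral.integral_add (hsp x) hfi,
            intervalIntegral.integral_const_mul, integral_rpow (Or.inl (by linarith)),
            Real.zero_rpow (by intro h; linarith), hrw, intervalIntegral.integral_of_le hx.le]
          ring_nf
  have hH_cont : ∀ τ : ℝ, 0 < τ → ContinuousAt Hfun τ := by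
    intro τ hτ
    refine continuousAt_const.mul
      (ContinuousAt.add ?_ (fracInt_continuousAt hθ0 hθ1 hgc hM τ hτ))
    exact continuousAt_const.mul (Real.continuousAt_rpow_const τ (-θ) (Or.inl (ne_of_gt hτ)))
  have hH_ii : IntervalIntegrable Hfun volume 0 t := by
    refine IntervalIntegrable.const_mul ?_ c0
    exact (hsp t).add ((intervalIntegrable_iff_integrableOn_Ioc_of_le ht.le).2
      (fracInt_integrableOn hθ0 hθ1 hgc hM t ht))
  have hmeasAt : StronglyMeasurableAtFilter Hfun (𝓝 t) volume := by
    have hco : ContinuousOn Hfun (Ioi 0) := fun τ hτ => (hH_cont τ hτ).continuousWithinAt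
    exact ⟨Ioi 0, Ioi_mem_nhds ht, hco.aestronglyMeasurable measurableSet_Ioi⟩
  have hderiv : HasDerivAt (fun u => ∫ τ in (0:ℝ)..u, Hfun τ) (Hfun t) t :=
    intervalIntegral.integral_hasDerivAt_right hH_ii hmeasAt (hH_cont t ht)
  have hev : (fun u => ∫ τ in (0:ℝ)..u, Hfun τ) =ᶠ[𝓝 t] RLkernel θ v := by
    filter_upwards [Ioi_mem_nhds ht] with u hu using (hker_eq u hu).symm
  have hRL : RLderiv θ v t = Hfun t := by
    rw [RLderiv, ← hev.deriv_eq, hderiv.deriv]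
  have hgC : ∀ u ∈ Ioc (0:ℝ) t, |g u| ≤ 2 * B * w₁ t := by
    intro u hu
    have hwu := hpos u (Set.mem_Ici.2 hu.1.le)
    have hmon := hmono u t hu.1.le hu.2
    have h2 := hB u (Set.mem_Ici.2 hu.1.le)
    show |2 * w₁ u * w₁' u| ≤ 2 * B * w₁ t
    rw [abs_mul, abs_mul, abs_two, abs_of_pos hwu]
    nlinarith [abs_nonneg (w₁' u)]
  have hfb := fracInt_bound hθ0 hθ1 hgc hM t Tw (2*B*w₁ t) ht hTw (by positivity) hgC hgzero
  have hv0 : v 0 = (w₁ 0) ^ 2 := rfl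
  have htθ : 0 < t ^ θ := Real.rpow_pos_of_pos ht θ
  have htnθ : (0:ℝ) ≤ t ^ (-θ) := Real.rpow_nonneg ht.le _
  have hTwθ : (0:ℝ) ≤ Tw ^ (1-θ) := Real.rpow_nonneg hTw.le _
  have habs : |Hfun t| ≤ c0 * (v 0 * t ^ (-θ)) + c0 * (2*B*w₁ t * Tw ^ (1-θ) / (1-θ)) := by
    have hc0nn : (0:ℝ) ≤ c0 := by rw [hc0def]; positivity
    have hval : Hfun t = c0 * (v 0 * t ^ (-θ) + fracInt θ g t) := rfl
    rw [hval, abs_mul, abs_of_nonneg hc0nn]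
    have h1 : |v 0 * t ^ (-θ) + fracInt θ g t|
        ≤ v 0 * t ^ (-θ) + 2*B*w₁ t * Tw ^ (1-θ) / (1-θ) := by
      refine (abs_add_le _ _).trans ?_
      have e : |v 0 * t ^ (-θ)| = v 0 * t ^ (-θ) := by
        rw [abs_of_nonneg]
        rw [hv0]
        positivity
      rw [e]
      exact add_le_add_right hfb _
    calc c0 * |v 0 * t ^ (-θ) + fracInt θ g t|
        ≤ c0 * (v 0 * t ^ (-θ) + 2*B*w₁ t * Tw ^ (1-θ) / (1-θ)) :=
          mul_le_mul_of_nonneg_left h1 hc0nn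
      _ = c0 * (v 0 * t ^ (-θ)) + c0 * (2*B*w₁ t * Tw ^ (1-θ) / (1-θ)) := by ring
  rw [hRL, div_le_iff₀ hwt]
  have e1 : c0 * (v 0 * t ^ (-θ)) ≤ w₁ 0 / (t ^ θ * Real.Gamma (1-θ)) * w₁ t := by
    rw [hv0, Real.rpow_neg ht.le, hc0def]
    have hsq : (w₁ 0) ^ 2 ≤ w₁ 0 * w₁ t := by
      nlinarith [hmono 0 t le_rfl ht.le]
    calc (Real.Gamma (1-θ))⁻¹ * ((w₁ 0)^2 * (t^θ)⁻¹)
        = (w₁ 0)^2 / (t^θ * Real.Gamma (1-θ)) := by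
          field_simp
      _ ≤ (w₁ 0 * w₁ t) / (t^θ * Real.Gamma (1-θ)) := by
          exact div_le_div_of_nonneg_right hsq (le_of_lt (mul_pos htθ hΓ)) |>.trans_eq rfl
      _ = w₁ 0 / (t^θ * Real.Gamma (1-θ)) * w₁ t := by ring
  have e2 : c0 * (2*B*w₁ t * Tw ^ (1-θ) / (1-θ))
      = 2 * B / Real.Gamma (2-θ) * Tw ^ (1-θ) * w₁ t := by
    rw [hΓ2, hc0def]
    field_simp
  calc |Hfun t| ≤ c0 * (v 0 * t ^ (-θ)) + c0 * (2*B*w₁ t * Tw ^ (1-θ) / (1-θ)) := habs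
    _ ≤ w₁ 0 / (t ^ θ * Real.Gamma (1-θ)) * w₁ t
        + 2 * B / Real.Gamma (2-θ) * Tw ^ (1-θ) * w₁ t := add_le_add e1 (le_of_eq e2)
    _ = (w₁ 0 / (t ^ θ * Real.Gamma (1-θ))
        + 2 * B / Real.Gamma (2-θ) * Tw ^ (1-θ)) * w₁ t := by ring
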